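/- Let s ∈ (0,1), and let v : Q → ℝ be a nonnegative function on an open set Q ⊆ ℝⁿ × ℝ, differentiable in t and in the direction e ∈ 𝕊^{n−1}, satisfying 0 < ∂_t v ≤ C ∂_e v and ∂_e v ≤ C d^s on the set {v > 0} ∩ Q, where d(x,t) is a nonnegative function vanishing on {v = 0}. Suppose moreover that for some C₁, |∇_x ∂_t v| ≤ C₁ d^{s−1} on {v>0} ∩ Q. Then for every direction e and every (x,t) ∈ {v>0} ∩ Q, one has |∂_e v(x,t)|^{1−s} |∂_t ∂_e v(x,t)|^s ≤ C₂ for a constant C₂ depending only on C, C₁, s; consequently t ↦ (∂_e v(x,t))^{1/s} is Lipschitz in t with constant C₂^{1/s}/s wherever defined, and hence ∂_e v is Hölder continuous of exponent s in t. -/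
import Mathlib


open scoped RealInnerProductSpace

private lemma aux_rpow_add_le {x y s : ℝ} (hx : 0 ≤ x) (hy : 0 ≤ y) (hs0 : 0 ≤ s)
    (hs1 : s ≤ 1) : (x + y) ^ s ≤ x ^ s + y ^ s := by
  have h := NNReal.rpow_add_le_add_rpow x.toNNReal y.toNNReal hs0 hs1
  have h' := (NNReal.coe_le_coe).2 h
  simpa [NNReal.coe_rpow, Real.coe_toNNReal _ hx, Real.coe_toNNReal _ hy,
    Real.coe_toNNReal _ (add_nonneg hx hy)] using h'

private lemma aux_abs_rpow_sub {a b s : ℝ} (ha : 0 ≤ a) (hb : 0 ≤ b) (hs0 : 0 ≤ s)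
    (hs1 : s ≤ 1) : |a ^ s - b ^ s| ≤ |a - b| ^ s := by
  wlog hab : b ≤ a generalizing a b
  · rw [abs_sub_comm, abs_sub_comm a b]; exact this hb ha (le_of_not_ge hab)
  have h1 : a ^ s ≤ (a - b) ^ s + b ^ s := by
    have := aux_rpow_add_le (sub_nonneg.2 hab) hb hs0 hs1
    simpa using this
  have h2 : b ^ s ≤ a ^ s := Real.rpow_le_rpow hb hab hs0
  rw [abs_of_nonneg (sub_nonneg.2 h2), abs_of_nonneg (sub_nonneg.2 hab)]
  linarith

/-- Interpolation argument of Proposition 5.4: from `0 < ∂_t v ≤ C ∂_e v`,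
`∂_e v ≤ C d^s` and `|∇_x ∂_t v| ≤ C₁ d^{s−1}` on `{v > 0} ∩ Q` one gets
`(∂_e v)^{1−s} |∂_t ∂_e v|^s ≤ C₂`, hence `t ↦ (∂_e v)^{1/s}` is Lipschitz with
constant `C₂^{1/s}/s`, and `∂_e v` is `s`-Hölder in `t`. -/
theorem stmt_11 (n : ℕ) (s C C₁ : ℝ) (hs : s ∈ Set.Ioo (0 : ℝ) 1) (hC : 0 < C)
    (hC₁ : 0 < C₁)
    (Q : Set (EuclideanSpace ℝ (Fin n) × ℝ)) (hQ : IsOpen Q)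
    (e : EuclideanSpace ℝ (Fin n)) (he : ‖e‖ = 1)
    (v d : EuclideanSpace ℝ (Fin n) → ℝ → ℝ)
    (vt ve vet : EuclideanSpace ℝ (Fin n) → ℝ → ℝ)
    (gvt : EuclideanSpace ℝ (Fin n) → ℝ → EuclideanSpace ℝ (Fin n))
    (hv_nonneg : ∀ p ∈ Q, 0 ≤ v p.1 p.2)
    (hd_nonneg : ∀ p ∈ Q, 0 ≤ d p.1 p.2)
    (hd_vanish : ∀ p ∈ Q, v p.1 p.2 = 0 → d p.1 p.2 = 0)
    (hdiff : ∀ p ∈ Q, 0 < v p.1 p.2 →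
      HasDerivAt (fun τ => v p.1 τ) (vt p.1 p.2) p.2 ∧
      HasDerivAt (fun h : ℝ => v (p.1 + h • e) p.2) (ve p.1 p.2) 0 ∧
      HasGradientAt (fun z => vt z p.2) (gvt p.1 p.2) p.1 ∧
      HasDerivAt (fun τ => ve p.1 τ) (vet p.1 p.2) p.2)
    (hmix : ∀ p ∈ Q, 0 < v p.1 p.2 → vet p.1 p.2 = ⟪gvt p.1 p.2, e⟫)
    (hvt_pos : ∀ p ∈ Q, 0 < v p.1 p.2 → 0 < vt p.1 p.2)
    (hvt_le : ∀ p ∈ Q, 0 < v p.1 p.2 → vt p.1 p.2 ≤ C * ve p.1 p.2)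
    (hve_le : ∀ p ∈ Q, 0 < v p.1 p.2 → ve p.1 p.2 ≤ C * (d p.1 p.2) ^ s)
    (hgvt_le : ∀ p ∈ Q, 0 < v p.1 p.2 → ‖gvt p.1 p.2‖ ≤ C₁ * (d p.1 p.2) ^ (s - 1)) :
    ∃ C₂ > (0 : ℝ),
      (∀ p ∈ Q, 0 < v p.1 p.2 →
        (ve p.1 p.2) ^ (1 - s) * |vet p.1 p.2| ^ s ≤ C₂) ∧
      (∀ (x : EuclideanSpace ℝ (Fin n)) (t₁ t₂ : ℝ),
        (∀ τ ∈ Set.uIcc t₁ t₂, (x, τ) ∈ Q ∧ 0 < v x τ) →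
        |(ve x t₁) ^ (1 / s) - (ve x t₂) ^ (1 / s)| ≤ C₂ ^ (1 / s) / s * |t₁ - t₂| ∧
        |ve x t₁ - ve x t₂| ≤ (C₂ ^ (1 / s) / s) ^ s * |t₁ - t₂| ^ s) := by
  obtain ⟨hs0, hs1⟩ := hs
  have hsne : s ≠ 0 := ne_of_gt hs0
  set C₂ : ℝ := C ^ (1 - s) * C₁ ^ s with hC₂def
  have hC₂pos : 0 < C₂ :=
    mul_pos (Real.rpow_pos_of_pos hC _) (Real.rpow_pos_of_pos hC₁ _)
  -- positivity of ve on the positivity set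
  have hve_pos : ∀ p ∈ Q, 0 < v p.1 p.2 → 0 < ve p.1 p.2 := by
    intro p hp hv
    have h1 := hvt_pos p hp hv
    have h2 := hvt_le p hp hv
    nlinarith
  -- positivity of d
  have hd_pos : ∀ p ∈ Q, 0 < v p.1 p.2 → 0 < d p.1 p.2 := by
    intro p hp hv
    rcases lt_or_eq_of_le (hd_nonneg p hp) with h | h
    · exact h
    · exfalso
      have h1 := hve_le p hp hv
      rw [← h, Real.zero_rpow hsne, mul_zero] at h1
      exact absurd (hve_pos p hp hv) (not_lt.2 h1)
  -- main interpolation bound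
  have hmain : ∀ p ∈ Q, 0 < v p.1 p.2 →
      (ve p.1 p.2) ^ (1 - s) * |vet p.1 p.2| ^ s ≤ C₂ := by
    intro p hp hv
    have hvep := hve_pos p hp hv
    have hdp := hd_pos p hp hv
    have hvet_le : |vet p.1 p.2| ≤ C₁ * (d p.1 p.2) ^ (s - 1) := by
      rw [hmix p hp hv]
      calc |⟪gvt p.1 p.2, e⟫| ≤ ‖gvt p.1 p.2‖ * ‖e‖ := abs_real_inner_le_norm _ _
        _ = ‖gvt p.1 p.2‖ := by rw [he, mul_one]
        _ ≤ C₁ * (d p.1 p.2) ^ (s - 1) := hgvt_le p hp hv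
    have hb1 : (ve p.1 p.2) ^ (1 - s) ≤ (C * (d p.1 p.2) ^ s) ^ (1 - s) :=
      Real.rpow_le_rpow hvep.le (hve_le p hp hv) (by linarith)
    have hb2 : |vet p.1 p.2| ^ s ≤ (C₁ * (d p.1 p.2) ^ (s - 1)) ^ s :=
      Real.rpow_le_rpow (abs_nonneg _) hvet_le hs0.le
    have hdone : (d p.1 p.2) ^ (s * (1 - s)) * (d p.1 p.2) ^ ((s - 1) * s) = 1 := by
      have hz : s * (1 - s) + (s - 1) * s = 0 := by ring
      rw [← Real.rpow_add hdp, hz, Real.rpow_zero]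
    calc (ve p.1 p.2) ^ (1 - s) * |vet p.1 p.2| ^ s
        ≤ (C * (d p.1 p.2) ^ s) ^ (1 - s) * (C₁ * (d p.1 p.2) ^ (s - 1)) ^ s := by
          apply mul_le_mul hb1 hb2 (Real.rpow_nonneg (abs_nonneg _) _)
            (Real.rpow_nonneg (by positivity) _)
      _ = C ^ (1 - s) * C₁ ^ s *
            ((d p.1 p.2) ^ (s * (1 - s)) * (d p.1 p.2) ^ ((s - 1) * s)) := by
          rw [Real.mul_rpow hC.le (Real.rpow_nonneg (hd_nonneg p hp) _),
            Real.mul_rpow hC₁.le (Real.rpow_nonneg (hd_nonneg p hp) _),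
            ← Real.rpow_mul (hd_nonneg p hp), ← Real.rpow_mul (hd_nonneg p hp)]
          ring
      _ = C₂ := by rw [hdone, mul_one]
  refine ⟨C₂, hC₂pos, hmain, ?_⟩
  intro x t₁ t₂ hx
  set K : ℝ := C₂ ^ (1 / s) / s with hKdef
  have hKpos : 0 < K := div_pos (Real.rpow_pos_of_pos hC₂pos _) hs0
  -- derivative bound for g τ = (ve x τ)^(1/s)
  have hderiv : ∀ τ ∈ Set.uIcc t₁ t₂,
      HasDerivWithinAt (fun τ => (ve x τ) ^ (1 / s))
        (vet x τ * (1 / s) * (ve x τ) ^ (1 / s - 1)) (Set.uIcc t₁ t₂) τ := by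
    intro τ hτ
    obtain ⟨hQτ, hvτ⟩ := hx τ hτ
    have hd4 := (hdiff (x, τ) hQτ hvτ).2.2.2
    have hvepos := hve_pos (x, τ) hQτ hvτ
    exact (hd4.rpow_const (Or.inl (ne_of_gt hvepos))).hasDerivWithinAt
  have hbound : ∀ τ ∈ Set.uIcc t₁ t₂,
      ‖vet x τ * (1 / s) * (ve x τ) ^ (1 / s - 1)‖ ≤ K := by
    intro τ hτ
    obtain ⟨hQτ, hvτ⟩ := hx τ hτ
    have hvepos := hve_pos (x, τ) hQτ hvτ
    have hm := hmain (x, τ) hQτ hvτ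
    have key : (ve x τ) ^ (1 / s - 1) * |vet x τ| ≤ C₂ ^ (1 / s) := by
      have h := Real.rpow_le_rpow
        (mul_nonneg (Real.rpow_nonneg hvepos.le _) (Real.rpow_nonneg (abs_nonneg _) _))
        hm (by positivity : (0:ℝ) ≤ 1 / s)
      rw [Real.mul_rpow (Real.rpow_nonneg hvepos.le _) (Real.rpow_nonneg (abs_nonneg _) _),
        ← Real.rpow_mul hvepos.le, ← Real.rpow_mul (abs_nonneg _)] at h
      have h1 : (1 - s) * (1 / s) = 1 / s - 1 := by field_simp
      have h2 : s * (1 / s) = 1 := by field_simp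
      rwa [h1, h2, Real.rpow_one] at h
    rw [Real.norm_eq_abs, abs_mul, abs_mul, abs_of_pos (by positivity : (0:ℝ) < 1/s),
      abs_of_nonneg (Real.rpow_nonneg hvepos.le _)]
    calc |vet x τ| * (1 / s) * (ve x τ) ^ (1 / s - 1)
        = (ve x τ) ^ (1 / s - 1) * |vet x τ| * (1 / s) := by ring
      _ ≤ C₂ ^ (1 / s) * (1 / s) :=
          mul_le_mul_of_nonneg_right key (by positivity)
      _ = K := by rw [hKdef]; ring
  have hmem1 : t₁ ∈ Set.uIcc t₁ t₂ := Set.left_mem_uIcc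
  have hmem2 : t₂ ∈ Set.uIcc t₁ t₂ := Set.right_mem_uIcc
  have hL := (convex_uIcc t₁ t₂).norm_image_sub_le_of_norm_hasDerivWithin_le
    hderiv hbound hmem2 hmem1
  have hLip : |(ve x t₁) ^ (1 / s) - (ve x t₂) ^ (1 / s)| ≤ K * |t₁ - t₂| := by
    simpa [Real.norm_eq_abs] using hL
  refine ⟨hLip, ?_⟩
  obtain ⟨_, hv1⟩ := hx t₁ hmem1
  obtain ⟨_, hv2⟩ := hx t₂ hmem2
  have ha : 0 < ve x t₁ := hve_pos (x, t₁) (hx t₁ hmem1).1 hv1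
  have hb : 0 < ve x t₂ := hve_pos (x, t₂) (hx t₂ hmem2).1 hv2
  have ea : ((ve x t₁) ^ (1 / s)) ^ s = ve x t₁ := by
    rw [← Real.rpow_mul ha.le, one_div, inv_mul_cancel₀ hsne, Real.rpow_one]
  have eb : ((ve x t₂) ^ (1 / s)) ^ s = ve x t₂ := by
    rw [← Real.rpow_mul hb.le, one_div, inv_mul_cancel₀ hsne, Real.rpow_one]
  calc |ve x t₁ - ve x t₂|
      = |((ve x t₁) ^ (1 / s)) ^ s - ((ve x t₂) ^ (1 / s)) ^ s| := by rw [ea, eb]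
    _ ≤ |(ve x t₁) ^ (1 / s) - (ve x t₂) ^ (1 / s)| ^ s :=
        aux_abs_rpow_sub (Real.rpow_nonneg ha.le _) (Real.rpow_nonneg hb.le _) hs0.le hs1.le
    _ ≤ (K * |t₁ - t₂|) ^ s := Real.rpow_le_rpow (abs_nonneg _) hLip hs0.le
    _ = K ^ s * |t₁ - t₂| ^ s := Real.mul_rpow hKpos.le (abs_nonneg _)
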